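/- For 1 < p ≤ 2, with A = 1/cos^p(π/(2p)) and B = tan(π/(2p)), for all real x with |x| ≤ π/2 one has A·cos^p(x) − B·cos(p x) ≥ 1. -/

import Mathlib

open Real

lemma aux_n_nonneg (α : ℝ) (hα0 : 0 < α) (hα1 : α ≤ 1) {x : ℝ}
    (hx0 : 0 ≤ x) (hx : x ≤ π / 2) :
    0 ≤ α * Real.cos (α * x) * Real.sin x - Real.sin (α * x) * Real.cos x := by
  set n : ℝ → ℝ := fun t => α * Real.cos (α * t) * Real.sin t - Real.sin (α * t) * Real.cos t
    with hn_def
  have hderiv : ∀ t : ℝ, HasDerivAt n ((1 - α ^ 2) * Real.sin (α * t) * Real.sin t) t := by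
    intro t
    have hid : HasDerivAt (fun s : ℝ => α * s) α t := by
      simpa using (hasDerivAt_id t).const_mul α
    have hc : HasDerivAt (fun s : ℝ => Real.cos (α * s)) (-Real.sin (α * t) * α) t := hid.cos
    have hs : HasDerivAt (fun s : ℝ => Real.sin (α * s)) (Real.cos (α * t) * α) t := hid.sin
    have h := ((hc.const_mul α).mul (Real.hasDerivAt_sin t)).sub
      (hs.mul (Real.hasDerivAt_cos t))
    refine HasDerivAt.congr_deriv h ?_
    ring
  have hmono : MonotoneOn n (Set.Icc 0 (π / 2)) := by
    apply monotoneOn_of_hasDerivWithinAt_nonneg (convex_Icc _ _)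
      (fun t _ => (hderiv t).continuousAt.continuousWithinAt)
      (fun t ht => (hderiv t).hasDerivWithinAt)
    intro t ht
    rw [interior_Icc] at ht
    obtain ⟨ht0, ht2⟩ := ht
    have hπ := Real.pi_pos
    have hst : 0 ≤ Real.sin t := Real.sin_nonneg_of_nonneg_of_le_pi (le_of_lt ht0) (by linarith)
    have hsαt : 0 ≤ Real.sin (α * t) := by
      apply Real.sin_nonneg_of_nonneg_of_le_pi (by positivity)
      nlinarith
    have h1 : (0:ℝ) ≤ 1 - α ^ 2 := by nlinarith
    exact mul_nonneg (mul_nonneg h1 hsαt) hst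
  have h0 : n 0 = 0 := by simp [hn_def]
  have := hmono (Set.left_mem_Icc.mpr (by positivity)) ⟨hx0, hx⟩ hx0
  rw [h0] at this
  exact this

lemma aux_cross (α : ℝ) (hα0 : 0 < α) (hα1 : α ≤ 1) {a b : ℝ}
    (ha : 0 ≤ a) (hab : a ≤ b) (hb : b ≤ π / 2) :
    Real.sin (α * a) * Real.sin b ≤ Real.sin (α * b) * Real.sin a := by
  have hπ := Real.pi_pos
  rcases eq_or_lt_of_le ha with h | h
  · simp [← h]
  have hb0 : 0 < b := lt_of_lt_of_le h hab
  have hsa : 0 < Real.sin a := Real.sin_pos_of_pos_of_lt_pi h (by linarith)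
  have hsb : 0 < Real.sin b := Real.sin_pos_of_pos_of_lt_pi hb0 (by linarith)
  have hmono : MonotoneOn (fun t => Real.sin (α * t) / Real.sin t) (Set.Ioc 0 (π / 2)) := by
    have hderiv : ∀ t ∈ Set.Ioc (0:ℝ) (π / 2),
        HasDerivAt (fun t => Real.sin (α * t) / Real.sin t)
          ((Real.cos (α * t) * α * Real.sin t - Real.sin (α * t) * Real.cos t)
            / Real.sin t ^ 2) t := by
      intro t ht
      have hst : 0 < Real.sin t := Real.sin_pos_of_pos_of_lt_pi ht.1 (by linarith [ht.2])
      have hid : HasDerivAt (fun s : ℝ => α * s) α t := by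
        simpa using (hasDerivAt_id t).const_mul α
      exact hid.sin.div (Real.hasDerivAt_sin t) (ne_of_gt hst)
    apply monotoneOn_of_hasDerivWithinAt_nonneg (convex_Ioc _ _)
      (fun t ht => (hderiv t ht).continuousAt.continuousWithinAt)
      (fun t ht => (hderiv t (interior_subset ht)).hasDerivWithinAt)
    intro t ht
    rw [interior_Ioc] at ht
    apply div_nonneg _ (sq_nonneg _)
    linarith [aux_n_nonneg α hα0 hα1 ht.1.le ht.2.le]
  have := hmono (Set.mem_Ioc.mpr ⟨h, hab.trans hb⟩) (Set.mem_Ioc.mpr ⟨hb0, hb⟩) hab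
  rw [div_le_div_iff₀ hsa hsb] at this
  linarith
set_option maxHeartbeats 1000000 in
theorem stmt_0 (p : ℝ) (hp1 : 1 < p) (hp2 : p ≤ 2) (x : ℝ) (hx : |x| ≤ π / 2) :
    (1 / Real.cos (π / (2 * p)) ^ p) * Real.cos x ^ p
      - Real.tan (π / (2 * p)) * Real.cos (p * x) ≥ 1 := by
  have hπ := Real.pi_pos
  have hp0 : (0:ℝ) < p := by linarith
  set c : ℝ := π / (2 * p) with hc_def
  have hc0 : 0 < c := by positivity
  have hcπ : c < π / 2 := by
    rw [hc_def, div_lt_div_iff₀ (by positivity) (by norm_num)]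
    nlinarith
  have hcos_c : 0 < Real.cos c := Real.cos_pos_of_mem_Ioo ⟨by linarith, hcπ⟩
  have hsin_c : 0 < Real.sin c := Real.sin_pos_of_pos_of_lt_pi hc0 (by linarith)
  have hpc : p * c = π / 2 := by
    rw [hc_def]; field_simp
  set α : ℝ := p - 1 with hα_def
  have hα0 : 0 < α := by simp [hα_def]; linarith
  have hα1 : α ≤ 1 := by simp [hα_def]; linarith
  have hαc : α * c = π / 2 - c := by rw [hα_def]; linarith [hpc]
  have hsin_αc : Real.sin (α * c) = Real.cos c := by rw [hαc, Real.sin_pi_div_two_sub]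
  set B : ℝ := Real.tan c with hB_def
  have hB : B = Real.sin c / Real.cos c := Real.tan_eq_sin_div_cos c
  set A : ℝ := 1 / Real.cos c ^ p with hA_def
  suffices key : ∀ y : ℝ, 0 ≤ y → y ≤ π / 2 →
      A * Real.cos y ^ p - B * Real.cos (p * y) ≥ 1 by
    rcases le_or_gt 0 x with hx0 | hx0
    · exact key x hx0 (by rwa [abs_of_nonneg hx0] at hx)
    · have h := key (-x) (by linarith) (by rwa [abs_of_neg hx0] at hx)
      rw [Real.cos_neg, mul_neg, Real.cos_neg] at h
      exact h
  intro y hy0 hy2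
  rcases eq_or_lt_of_le hy2 with hyend | hylt
  · -- endpoint y = π / 2
    subst hyend
    rw [Real.cos_pi_div_two, Real.zero_rpow (ne_of_gt hp0), mul_zero]
    have hcosp : Real.cos (p * (π / 2)) = -Real.sin (α * (π / 2)) := by
      have : p * (π / 2) = α * (π / 2) + π / 2 := by rw [hα_def]; ring
      rw [this, Real.cos_add_pi_div_two]
    rw [hcosp]
    have hcross := aux_cross α hα0 hα1 hc0.le hcπ.le (le_refl (π / 2))
    rw [hsin_αc, Real.sin_pi_div_two] at hcross
    -- cos c * 1 ≤ sin (α * π/2) * sin c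
    have h2 : 1 ≤ B * Real.sin (α * (π / 2)) := by
      rw [hB, div_mul_eq_mul_div, le_div_iff₀ hcos_c]
      nlinarith
    linarith
  -- interior case : y < π / 2
  have hcos_y : 0 < Real.cos y := Real.cos_pos_of_mem_Ioo ⟨by linarith, hylt⟩
  set φ : ℝ → ℝ := fun t => (1 + B * Real.cos (p * t)) / Real.cos t ^ p with hφ_def
  have hD : ∀ t : ℝ, -(π/2) < t → t < π / 2 → HasDerivAt φ
      (p * Real.cos t ^ (p - 1) * (Real.sin t - B * Real.sin (α * t))
        / (Real.cos t ^ p) ^ 2) t := by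
    intro t ht1 ht2
    have hct : 0 < Real.cos t := Real.cos_pos_of_mem_Ioo ⟨ht1, ht2⟩
    have hid : HasDerivAt (fun s : ℝ => p * s) p t := by
      simpa using (hasDerivAt_id t).const_mul p
    have hnum : HasDerivAt (fun s : ℝ => 1 + B * Real.cos (p * s))
        (B * (-Real.sin (p * t) * p)) t := (hid.cos.const_mul B).const_add 1
    have hden : HasDerivAt (fun s : ℝ => Real.cos s ^ p)
        ((-Real.sin t) * p * Real.cos t ^ (p - 1)) t :=
      (Real.hasDerivAt_cos t).rpow_const (Or.inl (ne_of_gt hct))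
    have hden_ne : Real.cos t ^ p ≠ 0 := ne_of_gt (Real.rpow_pos_of_pos hct p)
    have h := hnum.div hden hden_ne
    refine HasDerivAt.congr_deriv h ?_
    have hsplit : Real.cos t ^ p = Real.cos t ^ (p - 1) * Real.cos t := by
      have h1 := Real.rpow_add hct (p - 1) 1
      rw [sub_add_cancel, Real.rpow_one] at h1
      exact h1
    have hsin_sub : Real.sin (α * t) = Real.sin (p * t) * Real.cos t
        - Real.cos (p * t) * Real.sin t := by
      have : α * t = p * t - t := by rw [hα_def]; ring
      rw [this, Real.sin_sub]
    rw [div_eq_div_iff (by positivity) (by positivity), hsin_sub, hsplit]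
    ring
  have hφc : φ c = A := by
    rw [hφ_def]
    simp only [hpc, Real.cos_pi_div_two, mul_zero, add_zero, hA_def]
  have hφy : φ y ≤ A := by
    rw [← hφc]
    rcases le_or_gt y c with hyc | hyc
    · -- monotone on [0, c]
      have hmono : MonotoneOn φ (Set.Icc 0 c) := by
        apply monotoneOn_of_hasDerivWithinAt_nonneg (convex_Icc _ _)
          (fun t ht => (hD t (by cases ht; linarith) (by cases ht; linarith)).continuousAt.continuousWithinAt)
          (fun t ht => by
            rw [interior_Icc] at ht
            exact (hD t (by cases ht; linarith) (by cases ht; linarith)).hasDerivWithinAt)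
        intro t ht
        rw [interior_Icc] at ht
        obtain ⟨ht0, htc⟩ := ht
        have hct : 0 < Real.cos t := Real.cos_pos_of_mem_Ioo ⟨by linarith, by linarith⟩
        have hcross := aux_cross α hα0 hα1 ht0.le htc.le hcπ.le
        rw [hsin_αc] at hcross
        -- sin (α t) * sin c ≤ cos c * sin t
        have hψ : 0 ≤ Real.sin t - B * Real.sin (α * t) := by
          rw [hB, sub_nonneg, div_mul_eq_mul_div, div_le_iff₀ hcos_c]
          nlinarith
        have h1 : (0:ℝ) < Real.cos t ^ (p - 1) := Real.rpow_pos_of_pos hct _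
        have h2 : (0:ℝ) < (Real.cos t ^ p) ^ 2 := by positivity
        positivity
      exact hmono ⟨hy0, hyc⟩ ⟨hc0.le, le_refl c⟩ hyc
    · -- antitone on [c, π/2)
      have hanti : AntitoneOn φ (Set.Ico c (π / 2)) := by
        apply antitoneOn_of_hasDerivWithinAt_nonpos (convex_Ico _ _)
          (fun t ht => (hD t (by cases ht; linarith) (by cases ht; linarith)).continuousAt.continuousWithinAt)
          (fun t ht => by
            rw [interior_Ico] at ht
            exact (hD t (by cases ht; linarith) (by cases ht; linarith)).hasDerivWithinAt)
        intro t ht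
        rw [interior_Ico] at ht
        obtain ⟨htc, ht2⟩ := ht
        have hct : 0 < Real.cos t := Real.cos_pos_of_mem_Ioo ⟨by linarith, ht2⟩
        have hcross := aux_cross α hα0 hα1 hc0.le htc.le ht2.le
        rw [hsin_αc] at hcross
        -- cos c * sin t ≤ sin (α t) * sin c
        have hψ : Real.sin t - B * Real.sin (α * t) ≤ 0 := by
          rw [hB, sub_nonpos, div_mul_eq_mul_div, le_div_iff₀ hcos_c]
          nlinarith
        have h1 : (0:ℝ) < Real.cos t ^ (p - 1) := Real.rpow_pos_of_pos hct _
        have h2 : (0:ℝ) < (Real.cos t ^ p) ^ 2 := by positivity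
        apply div_nonpos_of_nonpos_of_nonneg _ h2.le
        nlinarith [mul_nonneg (mul_pos hp0 h1).le (neg_nonneg.2 hψ)]
      exact hanti ⟨le_refl c, hcπ⟩ ⟨hyc.le, hylt⟩ hyc.le
  have hcyp : 0 < Real.cos y ^ p := Real.rpow_pos_of_pos hcos_y p
  have hφy' : (1 + B * Real.cos (p * y)) / Real.cos y ^ p ≤ A := hφy
  rw [div_le_iff₀ hcyp] at hφy'
  linarith
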